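/- In the semi-discrete setting with X convex, let ψ⁰, ψ¹ ∈ ℝ^N, t ∈ [0,1], and ψ^t = (1−t)ψ⁰ + tψ¹. Then for every index i, the Minkowski combination of Laguerre cells satisfies (1−t)·V_i(ψ⁰) + t·V_i(ψ¹) ⊆ V_i(ψ^t). -/
import Mathlib


open MeasureTheory
open scoped RealInnerProductSpace ENNReal Pointwise

/-- The Laguerre cell `V_i(ψ) = {x ∈ X : ∀ j, ψ_j ≥ ψ_i + ⟨y_j − y_i, x⟩}`. -/
def laguerreCell {d N : ℕ} (X : Set (EuclideanSpace ℝ (Fin d)))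
    (y : Fin N → EuclideanSpace ℝ (Fin d)) (ψ : Fin N → ℝ) (i : Fin N) :
    Set (EuclideanSpace ℝ (Fin d)) :=
  {x ∈ X | ∀ j, ψ i + ⟪y j - y i, x⟫ ≤ ψ j}

/-- For `ψ^t = (1−t)ψ⁰ + tψ¹` and `X` convex, the Minkowski combination of Laguerre cells
satisfies `(1−t)·V_i(ψ⁰) + t·V_i(ψ¹) ⊆ V_i(ψ^t)`. -/
theorem laguerre_cell_minkowski
    (d N : ℕ) (X Y : Set (EuclideanSpace ℝ (Fin d)))
    (hXc : IsCompact X) (hXconv : Convex ℝ X)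
    (hYc : IsCompact Y) (hYconv : Convex ℝ Y)
    (y : Fin N → EuclideanSpace ℝ (Fin d))
    (hy : Function.Injective y) (hyY : ∀ i, y i ∈ Y)
    (ψ₀ ψ₁ : Fin N → ℝ) (t : ℝ) (ht : t ∈ Set.Icc (0 : ℝ) 1) (i : Fin N) :
    (1 - t) • laguerreCell X y ψ₀ i + t • laguerreCell X y ψ₁ i ⊆
      laguerreCell X y (fun j => (1 - t) * ψ₀ j + t * ψ₁ j) i := by
  rintro z ⟨a, ⟨x₀, ⟨hx₀X, hx₀⟩, rfl⟩, b, ⟨x₁, ⟨hx₁X, hx₁⟩, rfl⟩, rfl⟩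
  obtain ⟨ht0, ht1⟩ := ht
  refine ⟨hXconv hx₀X hx₁X (by linarith) ht0 (by ring), fun j => ?_⟩
  have h0 := hx₀ j
  have h1 := hx₁ j
  have := inner_smul_right (𝕜 := ℝ) (y j - y i) x₀ (1 - t)
  have := inner_smul_right (𝕜 := ℝ) (y j - y i) x₁ t
  rw [inner_add_right, inner_smul_right, inner_smul_right]; beta_reduce
  nlinarith [mul_le_mul_of_nonneg_left h0 (by linarith : (0:ℝ) ≤ 1 - t),
    mul_le_mul_of_nonneg_left h1 ht0]
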